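/- Suppose every surjective group homomorphism from a binary direct product B₁ × B₂ onto a nontrivial group A factors through one of the two projections. Then for any surjective homomorphism f : ∏_{i∈I} B_i → A, the collection U of subsets J ⊆ I such that f factors through the canonical projection ∏_{i∈I} B_i → ∏_{i∈J} B_i is an ultrafilter on I. -/

import Mathlib

/-- A (proper) filter on `I`, encoded as a set of subsets of `I`. -/
def IsProperFilterSet {I : Type*} (F : Set (Set I)) : Prop :=
  Set.univ ∈ F ∧ ∅ ∉ F ∧ (∀ s ∈ F, ∀ t ∈ F, s ∩ t ∈ F) ∧ ∀ s ∈ F, ∀ t : Set I, s ⊆ t → t ∈ F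

/-- An ultrafilter on `I`, encoded as a set of subsets of `I`: a proper filter
containing, for each subset, either it or its complement. -/
def IsUltrafilterSet {I : Type*} (F : Set (Set I)) : Prop :=
  IsProperFilterSet F ∧ ∀ s : Set I, s ∈ F ∨ sᶜ ∈ F

/-- The canonical projection of a direct product of groups onto the
subproduct indexed by `J ⊆ I`. -/
def projHom {I : Type u} (B : I → Type u) [∀ i, Group (B i)] (J : Set I) :
    (∀ i, B i) →* ∀ j : J, B j :=
  Pi.monoidHom fun j => Pi.evalMonoidHom B j

open Classical in
/-- Extension by `1` outside `J`. -/
noncomputable def extHom {I : Type u} (B : I → Type u) [∀ i, Group (B i)] (J : Set I) :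
    (∀ j : J, B j) →* ∀ i, B i where
  toFun w i := if h : i ∈ J then w ⟨i, h⟩ else 1
  map_one' := by funext i; by_cases h : i ∈ J <;> simp [h]
  map_mul' w w' := by funext i; by_cases h : i ∈ J <;> simp [h]

open Classical in
/-- Combining the two subproducts over `J` and `Jᶜ` into the full product. -/
noncomputable def combHom {I : Type u} (B : I → Type u) [∀ i, Group (B i)] (J : Set I) :
    ((∀ j : J, B j) × (∀ j : (Jᶜ : Set I), B j)) →* ∀ i, B i where
  toFun p i := if h : i ∈ J then p.1 ⟨i, h⟩ else p.2 ⟨i, h⟩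
  map_one' := by funext i; by_cases h : i ∈ J <;> simp [h]
  map_mul' p q := by funext i; by_cases h : i ∈ J <;> simp [h]

theorem stmt12 {A : Type u} [Group A] [Nontrivial A]
    (hbin : ∀ (B₁ B₂ : Type u) [Group B₁] [Group B₂] (g : B₁ × B₂ →* A),
      Function.Surjective g →
      (∃ g₁ : B₁ →* A, g = g₁.comp (MonoidHom.fst B₁ B₂)) ∨
      (∃ g₂ : B₂ →* A, g = g₂.comp (MonoidHom.snd B₁ B₂)))
    {I : Type u} (B : I → Type u) [∀ i, Group (B i)]
    (f : (∀ i, B i) →* A) (hf : Function.Surjective f) :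
    IsUltrafilterSet {J : Set I | ∃ g : (∀ j : J, B j) →* A,
      f = g.comp (projHom B J)} := by
  classical
  set U : Set (Set I) := {J : Set I | ∃ g : (∀ j : J, B j) →* A,
      f = g.comp (projHom B J)} with hU
  -- membership gives "depends only on J"
  have dep : ∀ J ∈ U, ∀ x y : ∀ i, B i, (∀ i ∈ J, x i = y i) → f x = f y := by
    rintro J ⟨g, rfl⟩ x y hxy
    simp only [MonoidHom.comp_apply]
    congr 1
    funext j
    exact hxy j j.2
  -- "depends only on J" gives membership
  have mem_of_dep : ∀ J : Set I,
      (∀ x y : ∀ i, B i, (∀ i ∈ J, x i = y i) → f x = f y) → J ∈ U := by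
    intro J h
    refine ⟨f.comp (extHom B J), ?_⟩
    ext x
    refine h x _ fun i hi => ?_
    simp [extHom, projHom, hi]; rfl
  constructor
  · refine ⟨?_, ?_, ?_, ?_⟩
    · exact mem_of_dep _ fun x y h => by
        have : x = y := funext fun i => h i trivial
        rw [this]
    · rintro ⟨g, hg⟩
      obtain ⟨a, ha⟩ := exists_ne (1 : A)
      obtain ⟨x, rfl⟩ := hf a
      apply ha
      have h1 : projHom B (∅ : Set I) x = projHom B (∅ : Set I) 1 := by
        funext j; exact absurd j.2 (Set.notMem_empty j.1)
      calc f x = g (projHom B _ x) := by rw [hg]; rfl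
        _ = g (projHom B _ 1) := by rw [h1]
        _ = f 1 := by rw [hg]; rfl
        _ = 1 := map_one f
    · intro s hs t ht
      refine mem_of_dep _ fun x y hxy => ?_
      set z : ∀ i, B i := fun i => if h : i ∈ s then x i else y i with hz
      have hxz : f x = f z := dep s hs x z fun i hi => by simp [hz, hi]
      have hzy : f z = f y := dep t ht z y fun i hi => by
        by_cases h : i ∈ s
        · simp [hz, h, hxy i ⟨h, hi⟩]
        · simp [hz, h]
      rw [hxz, hzy]
    · intro s hs t hst
      exact mem_of_dep _ fun x y hxy => dep s hs x y fun i hi => hxy i (hst hi)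
  · intro J
    set gbin : ((∀ j : J, B j) × (∀ j : (Jᶜ : Set I), B j)) →* A :=
      f.comp (combHom B J) with hgbin
    have hcomb : ∀ x : ∀ i, B i, combHom B J (projHom B J x, projHom B Jᶜ x) = x := by
      intro x; funext i; by_cases h : i ∈ J <;> simp [combHom, projHom, h] <;> rfl
    have hsurj : Function.Surjective gbin := by
      intro a
      obtain ⟨x, rfl⟩ := hf a
      exact ⟨(projHom B J x, projHom B Jᶜ x), by simp [hgbin, hcomb x]⟩
    rcases hbin _ _ gbin hsurj with ⟨g₁, hg₁⟩ | ⟨g₂, hg₂⟩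
    · left
      refine ⟨g₁, ?_⟩
      ext x
      have := congrArg (fun h => h (projHom B J x, projHom B Jᶜ x)) hg₁
      simpa [hgbin, hcomb x] using this
    · right
      refine ⟨g₂, ?_⟩
      ext x
      have := congrArg (fun h => h (projHom B J x, projHom B Jᶜ x)) hg₂
      simpa [hgbin, hcomb x] using this
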